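/- Fix n ≥ 1. Let F be a maximal intersecting subfamily of P([n]) and let A ∈ F be a minimal set of F (i.e., no proper subset of A belongs to F) such that {|A|, n − |A|} ≠ {⌊n/2⌋, ⌈n/2⌉}. Define G = ({B ⊆ [n+1] : B ∩ [n] ∈ F} \ {A}) ∪ {[n+1]\A}. Then G is a maximal intersecting subfamily of P([n+1]) that is not ∅-minimal. -/

import Mathlib

open Finset

variable {m : ℕ}

/-- A family of finsets is intersecting if any two members meet. -/
def IsIntersecting (F : Finset (Finset (Fin m))) : Prop :=
  ∀ A ∈ F, ∀ B ∈ F, (A ∩ B).Nonempty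

/-- A maximal intersecting subfamily of the power set of `Fin m`. -/
def IsMaxIntersecting (F : Finset (Finset (Fin m))) : Prop :=
  IsIntersecting F ∧ ∀ G : Finset (Finset (Fin m)), IsIntersecting G → F ⊆ G → G ⊆ F

/-- A family is subset-closed if it contains all subsets of its members. -/
def IsSubsetClosed (F : Finset (Finset (Fin m))) : Prop :=
  ∀ A ∈ F, ∀ B ⊆ A, B ∈ F

/-- The embedding of a family into `ℝ^{P([m])}`. -/
def famVec (F : Finset (Finset (Fin m))) : Finset (Fin m) → ℝ := fun A =>
  if A ∈ F ∧ Aᶜ ∉ F then 1 else if A ∉ F ∧ Aᶜ ∈ F then -1 else 0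

/-- The standard basis vector `e_A` of `ℝ^{P([m])}`. -/
def stdBasis (A : Finset (Fin m)) : Finset (Fin m) → ℝ := fun B => if B = A then 1 else 0

/-- The star of a family centered at `a`. -/
def starFam (a : Fin m) (F : Finset (Finset (Fin m))) : Finset (Finset (Fin m)) :=
  F.filter fun A => a ∈ A

/-- The setwise complement (dual) `F* = {Aᶜ : A ∈ F}`. -/
def dualFam (F : Finset (Finset (Fin m))) : Finset (Finset (Fin m)) :=
  F.image fun A => Aᶜ

/-- `Tpath σ C k = C △ {σ(1), …, σ(k)}` (0-indexed: the images of the first `k` indices). -/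
def Tpath (σ : Equiv.Perm (Fin m)) (C : Finset (Fin m)) (k : ℕ) : Finset (Fin m) :=
  symmDiff C ((Finset.univ.filter fun i : Fin m => (i : ℕ) < k).image σ)

/-- The path-sum `Λ(H)` as a vector in `ℝ^{P([m]) × P([m])}`: at coordinate `(X, Y)` it is the
number of triples `(σ, C, k)` whose `k`-th path step goes from `X` to `Y`, minus the number of
triples whose `k`-th step goes from `Y` to `X`. -/
def LamW (H : Finset (Finset (Fin m))) (X Y : Finset (Fin m)) : ℝ :=
  ∑ σ : Equiv.Perm (Fin m), ∑ C ∈ H, ∑ k ∈ Finset.Icc 1 m,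
    ((if Tpath σ C (k - 1) = X ∧ Tpath σ C k = Y then (1 : ℝ) else 0)
      - (if Tpath σ C (k - 1) = Y ∧ Tpath σ C k = X then (1 : ℝ) else 0))

/-- A maximal intersecting family `F` is `∅`-minimal if for every `a`, the coordinate
`Λ(F*)_{(∅,{a})}` is the minimum of `Λ(F*)_{(A, A ∪ {a})}` over all `A ⊆ [m] \ {a}`. -/
def EmptyMinimal (F : Finset (Finset (Fin m))) : Prop :=
  ∀ a : Fin m, ∀ A : Finset (Fin m), a ∉ A →
    LamW (dualFam F) ∅ {a} ≤ LamW (dualFam F) A (insert a A)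

/-- The copy of `[n]` inside `Fin (n+1)`. -/
def groundN (n : ℕ) : Finset (Fin (n + 1)) := Finset.univ.filter fun x => (x : ℕ) < n

/-- The family `G = ({B ⊆ [n+1] : B ∩ [n] ∈ F} \ {A}) ∪ {[n+1] \ A}`. -/
def gFam (n : ℕ) (F : Finset (Finset (Fin (n + 1)))) (A : Finset (Fin (n + 1))) :
    Finset (Finset (Fin (n + 1))) :=
  ((Finset.univ.filter fun B : Finset (Fin (n + 1)) => B ∩ groundN n ∈ F).erase A) ∪ {Aᶜ}

namespace NEM

open Equiv

/-! ### symmDiff helpers -/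

lemma symmDiff_singleton_not_mem {D : Finset (Fin m)} {a : Fin m} (h : a ∉ D) :
    symmDiff D {a} = insert a D := by
  ext x
  simp only [Finset.mem_symmDiff, Finset.mem_singleton, Finset.mem_insert]
  constructor
  · rintro (⟨hx, hne⟩ | ⟨rfl, _⟩) <;> tauto
  · rintro (rfl | hx)
    · exact Or.inr ⟨rfl, h⟩
    · exact Or.inl ⟨hx, fun hxa => h (hxa ▸ hx)⟩

lemma symmDiff_insert_singleton {D : Finset (Fin m)} {a : Fin m} (h : a ∉ D) :
    symmDiff (insert a D) {a} = D := by
  ext x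
  simp only [Finset.mem_symmDiff, Finset.mem_singleton, Finset.mem_insert]
  constructor
  · rintro (⟨hx | hx, hne⟩ | ⟨rfl, hx⟩) <;> tauto
  · intro hx
    exact Or.inl ⟨Or.inr hx, fun hxa => h (hxa ▸ hx)⟩

lemma empty_symmDiff (T : Finset (Fin m)) : symmDiff (∅ : Finset (Fin m)) T = T := by
  ext x; simp [Finset.mem_symmDiff]

lemma symmDiff_cancel_iff {D S T : Finset (Fin m)} :
    symmDiff D S = T ↔ S = symmDiff D T := by
  constructor
  · rintro rfl; rw [symmDiff_symmDiff_cancel_left]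
  · rintro rfl; rw [symmDiff_symmDiff_cancel_left]

lemma insert_symmDiff {D S : Finset (Fin m)} {a : Fin m} (hD : a ∉ D) (hS : a ∉ S) :
    symmDiff (insert a D) S = insert a (symmDiff D S) := by
  have h1 : a ∉ symmDiff D S := by
    rw [Finset.mem_symmDiff]; rintro (⟨h, -⟩ | ⟨h, -⟩) <;> [exact hD h; exact hS h]
  rw [← symmDiff_singleton_not_mem hD, ← symmDiff_singleton_not_mem h1,
    symmDiff_comm D {a}, symmDiff_assoc]
  exact symmDiff_comm _ _

/-! ### Small cardinality facts -/

lemma card_filter_lt (j : ℕ) (hj : j ≤ m) :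
    (univ.filter fun i : Fin m => (i : ℕ) < j).card = j := by
  have : (univ.filter fun i : Fin m => (i : ℕ) < j)
      = (Finset.range j).attachFin (fun x hx => lt_of_lt_of_le (Finset.mem_range.mp hx) hj) := by
    ext i
    simp [Finset.mem_attachFin]
  rw [this, Finset.card_attachFin, Finset.card_range]

lemma filter_lt_succ (k : ℕ) (hk : k < m) :
    (univ.filter fun i : Fin m => (i : ℕ) < k + 1)
      = insert ⟨k, hk⟩ (univ.filter fun i : Fin m => (i : ℕ) < k) := by
  ext i
  simp only [Finset.mem_filter, Finset.mem_insert, Finset.mem_univ, true_and]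
  constructor
  · intro h
    rcases Nat.lt_succ_iff_lt_or_eq.mp h with h | h
    · exact Or.inr h
    · exact Or.inl (Fin.ext h)
  · rintro (rfl | h)
    · exact Nat.lt_succ_self k
    · exact Nat.lt_succ_of_lt h

lemma Tpath_succ (σ : Perm (Fin m)) (C : Finset (Fin m)) (k : ℕ) (hk : k < m) :
    Tpath σ C (k + 1) = symmDiff (Tpath σ C k) {σ ⟨k, hk⟩} := by
  have hnot : σ ⟨k, hk⟩ ∉ (univ.filter fun i : Fin m => (i : ℕ) < k).image σ := by
    intro h
    rcases Finset.mem_image.mp h with ⟨i, hi, hσ⟩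
    have : i = ⟨k, hk⟩ := σ.injective hσ
    subst this
    simpa using (Finset.mem_filter.mp hi).2
  rw [Tpath, Tpath, filter_lt_succ k hk, Finset.image_insert,
    ← symmDiff_singleton_not_mem hnot,
    symmDiff_comm ((univ.filter fun i : Fin m => (i : ℕ) < k).image σ),
    ← symmDiff_assoc, symmDiff_right_comm]

/-! ### The prefix set of a permutation -/

def Sset (a : Fin m) (σ : Perm (Fin m)) : Finset (Fin m) :=
  (univ.filter fun i : Fin m => (i : ℕ) < ((σ.symm a : Fin m) : ℕ)).image σ

lemma not_mem_Sset (a : Fin m) (σ : Perm (Fin m)) : a ∉ Sset a σ := by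
  intro h
  rcases Finset.mem_image.mp h with ⟨i, hi, hσ⟩
  have : i = σ.symm a := by
    rw [Equiv.eq_symm_apply]; exact hσ
  subst this
  simpa using (Finset.mem_filter.mp hi).2

lemma card_Sset (a : Fin m) (σ : Perm (Fin m)) :
    (Sset a σ).card = ((σ.symm a : Fin m) : ℕ) := by
  rw [Sset, Finset.card_image_of_injective _ σ.injective,
    card_filter_lt _ (le_of_lt (σ.symm a).isLt)]

lemma Sset_subset (a : Fin m) (σ : Perm (Fin m)) : Sset a σ ⊆ univ.erase a := by
  intro x hx
  exact Finset.mem_erase.mpr ⟨fun h => not_mem_Sset a σ (h ▸ hx), Finset.mem_univ x⟩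

/-! ### The inner sum over path steps -/

lemma inner_sum (σ : Perm (Fin m)) (C D : Finset (Fin m)) (a : Fin m) (ha : a ∉ D) :
    (∑ k ∈ Finset.Icc 1 m,
      ((if Tpath σ C (k - 1) = D ∧ Tpath σ C k = insert a D then (1 : ℝ) else 0)
        - (if Tpath σ C (k - 1) = insert a D ∧ Tpath σ C k = D then (1 : ℝ) else 0)))
    = (if C = symmDiff D (Sset a σ) then (1 : ℝ) else 0)
      - (if C = symmDiff (insert a D) (Sset a σ) then (1 : ℝ) else 0) := by
  set j : ℕ := ((σ.symm a : Fin m) : ℕ) with hj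
  have hjm : j < m := (σ.symm a).isLt
  have hσj : σ ⟨j, hjm⟩ = a := by
    have : (⟨j, hjm⟩ : Fin m) = σ.symm a := by ext; simp [hj]
    rw [this, Equiv.apply_symm_apply]
  have hmem : j + 1 ∈ Finset.Icc 1 m := by
    rw [Finset.mem_Icc]; omega
  rw [Finset.sum_eq_single_of_mem (j + 1) hmem]
  · -- main term
    have h1 : Tpath σ C (j + 1 - 1) = symmDiff C (Sset a σ) := by
      simp only [Nat.add_sub_cancel]
      rfl
    have h2 : Tpath σ C (j + 1) = symmDiff (symmDiff C (Sset a σ)) {a} := by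
      rw [Tpath_succ σ C j hjm, hσj]
      congr 1
    rw [h1, h2]
    have hkey : ∀ X : Finset (Fin m), (symmDiff C (Sset a σ) = X ↔ C = symmDiff X (Sset a σ)) := by
      intro X
      constructor
      · rintro rfl; rw [symmDiff_symmDiff_cancel_right]
      · rintro rfl; rw [symmDiff_symmDiff_cancel_right]
    by_cases hC1 : C = symmDiff D (Sset a σ)
    · have hne : ¬ C = symmDiff (insert a D) (Sset a σ) := by
        intro hC2
        have : D = insert a D := by
          have := hC1.symm.trans hC2
          have h3 := congrArg (fun Z => symmDiff Z (Sset a σ)) this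
          simpa [symmDiff_symmDiff_cancel_right] using h3
        exact ha (this ▸ Finset.mem_insert_self a D)
      rw [if_pos, if_neg, if_pos hC1, if_neg hne]
      · intro hcon
        exact hne ((hkey _).mp hcon.1)
      · constructor
        · exact (hkey D).mpr hC1
        · rw [(hkey D).mpr hC1, symmDiff_singleton_not_mem ha]
    · by_cases hC2 : C = symmDiff (insert a D) (Sset a σ)
      · rw [if_neg, if_pos, if_neg hC1, if_pos hC2]
        · constructor
          · exact (hkey _).mpr hC2
          · rw [(hkey _).mpr hC2, symmDiff_insert_singleton ha]
        · intro hcon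
          exact hC1 ((hkey _).mp hcon.1)
      · have hnc1 : ¬(symmDiff C (Sset a σ) = D ∧
            symmDiff (symmDiff C (Sset a σ)) {a} = insert a D) := by
          rintro ⟨hcon, -⟩; exact hC1 ((hkey _).mp hcon)
        have hnc2 : ¬(symmDiff C (Sset a σ) = insert a D ∧
            symmDiff (symmDiff C (Sset a σ)) {a} = D) := by
          rintro ⟨hcon, -⟩; exact hC2 ((hkey _).mp hcon)
        rw [if_neg hnc1, if_neg hnc2, if_neg hC1, if_neg hC2]
  · -- other k
    intro k hk hkne
    rw [Finset.mem_Icc] at hk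
    obtain ⟨l, rfl⟩ : ∃ l, k = l + 1 := ⟨k - 1, by omega⟩
    have hlm : l < m := by omega
    have hstep : Tpath σ C (l + 1) = symmDiff (Tpath σ C l) {σ ⟨l, hlm⟩} := Tpath_succ σ C l hlm
    have hne : σ ⟨l, hlm⟩ ≠ a := by
      intro h
      have : (⟨l, hlm⟩ : Fin m) = σ.symm a := by rw [Equiv.eq_symm_apply]; exact h
      apply hkne
      have := congrArg Fin.val this
      simp at this
      omega
    have key : ∀ X Y : Finset (Fin m), a ∉ X → Y = insert a X →
        ¬ (Tpath σ C (l + 1 - 1) = X ∧ Tpath σ C (l + 1) = Y) := by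
      rintro X Y haX rfl ⟨hfst, hsnd⟩
      simp only [Nat.add_sub_cancel] at hfst
      rw [hstep, hfst] at hsnd
      have haa : a ∈ symmDiff X {σ ⟨l, hlm⟩} := hsnd ▸ Finset.mem_insert_self a X
      rw [Finset.mem_symmDiff] at haa
      rcases haa with ⟨h1, _⟩ | ⟨h1, _⟩
      · exact haX h1
      · exact hne (Finset.mem_singleton.mp h1).symm
    have key2 : ¬ (Tpath σ C (l + 1 - 1) = insert a D ∧ Tpath σ C (l + 1) = D) := by
      rintro ⟨hfst, hsnd⟩
      simp only [Nat.add_sub_cancel] at hfst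
      rw [hstep, hfst] at hsnd
      have haa : a ∈ symmDiff (insert a D) {σ ⟨l, hlm⟩} := by
        rw [Finset.mem_symmDiff]
        left
        exact ⟨Finset.mem_insert_self a D, by simpa using fun h => hne h.symm⟩
      rw [hsnd] at haa
      exact ha haa
    rw [if_neg (key D (insert a D) ha rfl), if_neg key2, sub_zero]

lemma lamW_eq (H : Finset (Finset (Fin m))) (D : Finset (Fin m)) (a : Fin m) (ha : a ∉ D) :
    LamW H D (insert a D) = ∑ σ : Perm (Fin m),
      ((if symmDiff D (Sset a σ) ∈ H then (1 : ℝ) else 0)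
        - (if symmDiff (insert a D) (Sset a σ) ∈ H then (1 : ℝ) else 0)) := by
  rw [LamW]
  refine Finset.sum_congr rfl fun σ _ => ?_
  calc ∑ C ∈ H, ∑ k ∈ Finset.Icc 1 m,
      ((if Tpath σ C (k - 1) = D ∧ Tpath σ C k = insert a D then (1 : ℝ) else 0)
        - (if Tpath σ C (k - 1) = insert a D ∧ Tpath σ C k = D then (1 : ℝ) else 0))
      = ∑ C ∈ H, ((if C = symmDiff D (Sset a σ) then (1 : ℝ) else 0)
        - (if C = symmDiff (insert a D) (Sset a σ) then (1 : ℝ) else 0)) := by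
        exact Finset.sum_congr rfl fun C _ => inner_sum σ C D a ha
    _ = _ := by
        rw [Finset.sum_sub_distrib, Finset.sum_ite_eq' H, Finset.sum_ite_eq' H]

/-! ### Counting permutations with a given prefix set -/

def Nfib (a : Fin m) (S : Finset (Fin m)) : ℕ :=
  (univ.filter fun σ : Perm (Fin m) => Sset a σ = S).card

lemma subtypeCongr_apply_left {p q : Fin m → Prop} [DecidablePred p] [DecidablePred q]
    (e : { x // p x } ≃ { x // q x }) (f : { x // ¬p x } ≃ { x // ¬q x })
    (x : Fin m) (hx : p x) : Equiv.subtypeCongr e f x = (e ⟨x, hx⟩ : Fin m) := by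
  simp [Equiv.subtypeCongr, hx]

lemma subtypeCongr_apply_right {p q : Fin m → Prop} [DecidablePred p] [DecidablePred q]
    (e : { x // p x } ≃ { x // q x }) (f : { x // ¬p x } ≃ { x // ¬q x })
    (x : Fin m) (hx : ¬ p x) : Equiv.subtypeCongr e f x = (f ⟨x, hx⟩ : Fin m) := by
  simp [Equiv.subtypeCongr, hx]

lemma exists_perm_fix (a : Fin m) {S S' : Finset (Fin m)}
    (hS : S ⊆ univ.erase a) (hS' : S' ⊆ univ.erase a) (hc : S.card = S'.card) :
    ∃ τ : Perm (Fin m), τ a = a ∧ S.image τ = S' := by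
  classical
  have hcc : (univ \ S).card = (univ \ S').card := by
    rw [Finset.card_sdiff_of_subset (Finset.subset_univ _), Finset.card_sdiff_of_subset (Finset.subset_univ _), hc]
  let e : {x : Fin m // x ∈ S} ≃ {x : Fin m // x ∈ S'} := Finset.equivOfCardEq hc
  let f0 : {x : Fin m // x ∈ univ \ S} ≃ {x : Fin m // x ∈ univ \ S'} := Finset.equivOfCardEq hcc
  let f : {x : Fin m // ¬ x ∈ S} ≃ {x : Fin m // ¬ x ∈ S'} :=
    ((Equiv.subtypeEquivRight (fun x => by simp)).trans f0).trans
      (Equiv.subtypeEquivRight (fun x => by simp))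
  let τ1 : Perm (Fin m) := Equiv.subtypeCongr e f
  have haS : a ∉ S := fun h => (Finset.mem_erase.mp (hS h)).1 rfl
  have haS' : a ∉ S' := fun h => (Finset.mem_erase.mp (hS' h)).1 rfl
  have hτ1S : ∀ x ∈ S, τ1 x ∈ S' := by
    intro x hx
    rw [show τ1 x = (e ⟨x, hx⟩ : Fin m) from subtypeCongr_apply_left e f x hx]
    exact (e ⟨x, hx⟩).2
  set b : Fin m := τ1 a with hb
  have hbS' : b ∉ S' := by
    rw [hb, show τ1 a = (f ⟨a, haS⟩ : Fin m) from subtypeCongr_apply_right e f a haS]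
    exact (f ⟨a, haS⟩).2
  refine ⟨τ1.trans (Equiv.swap b a), ?_, ?_⟩
  · rw [Equiv.trans_apply, ← hb, Equiv.swap_apply_left]
  · have himage : ∀ x ∈ S, (τ1.trans (Equiv.swap b a)) x ∈ S' := by
      intro x hx
      have h1 : τ1 x ∈ S' := hτ1S x hx
      have hxa : x ≠ a := fun h => haS (h ▸ hx)
      have h2 : τ1 x ≠ b := fun h => hxa (τ1.injective (h.trans hb))
      have h3 : τ1 x ≠ a := fun h => haS' (h ▸ h1)
      simp [Equiv.trans_apply, Equiv.swap_apply_of_ne_of_ne h2 h3, h1]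
    apply Finset.eq_of_subset_of_card_le
    · intro y hy
      rcases Finset.mem_image.mp hy with ⟨x, hx, rfl⟩
      exact himage x hx
    · rw [Finset.card_image_of_injective _ (τ1.trans (Equiv.swap b a)).injective, hc]

lemma Sset_trans (a : Fin m) (σ τ : Perm (Fin m)) (hτ : τ a = a) :
    Sset a (σ.trans τ) = (Sset a σ).image τ := by
  have hsymm : (σ.trans τ).symm a = σ.symm a := by
    have : τ.symm a = a := by rw [Equiv.symm_apply_eq, hτ]
    simp [Equiv.symm_trans_apply, this]
  rw [Sset, Sset, hsymm, Finset.image_image]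
  rfl

lemma Nfib_congr (a : Fin m) {S S' : Finset (Fin m)}
    (hS : S ⊆ univ.erase a) (hS' : S' ⊆ univ.erase a) (hc : S.card = S'.card) :
    Nfib a S = Nfib a S' := by
  classical
  obtain ⟨τ, hτa, hτS⟩ := exists_perm_fix a hS hS' hc
  have hτS' : S'.image τ.symm = S := by
    rw [← hτS, Finset.image_image]
    simp
  have hτa' : τ.symm a = a := by rw [Equiv.symm_apply_eq, hτa]
  refine Finset.card_bij' (fun σ _ => σ.trans τ) (fun σ _ => σ.trans τ.symm) ?_ ?_ ?_ ?_
  case refine_1 =>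
    intro σ hσ
    rw [Finset.mem_filter] at hσ ⊢
    exact ⟨Finset.mem_univ _, by rw [Sset_trans a σ τ hτa, hσ.2, hτS]⟩
  case refine_2 =>
    intro σ hσ
    rw [Finset.mem_filter] at hσ ⊢
    exact ⟨Finset.mem_univ _, by rw [Sset_trans a σ τ.symm hτa', hσ.2, hτS']⟩
  case refine_3 => intro σ _; ext x; simp
  case refine_4 => intro σ _; ext x; simp

lemma card_perm_apply_eq (x0 a : Fin m) :
    (univ.filter fun σ : Perm (Fin m) => σ x0 = a).card * m = Nat.factorial m := by
  classical
  have hconst : ∀ b : Fin m,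
      (univ.filter fun σ : Perm (Fin m) => σ x0 = b).card
        = (univ.filter fun σ : Perm (Fin m) => σ x0 = a).card := by
    intro b
    refine Finset.card_bij' (fun σ _ => σ.trans (Equiv.swap b a))
      (fun σ _ => σ.trans (Equiv.swap b a)) ?_ ?_ ?_ ?_
    case refine_1 =>
      intro σ hσ
      rw [Finset.mem_filter] at hσ ⊢
      refine ⟨Finset.mem_univ _, ?_⟩
      simp [Equiv.trans_apply, hσ.2, Equiv.swap_apply_left]
    case refine_2 =>
      intro σ hσ
      rw [Finset.mem_filter] at hσ ⊢
      refine ⟨Finset.mem_univ _, ?_⟩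
      simp [Equiv.trans_apply, hσ.2, Equiv.swap_apply_right]
    case refine_3 => intro σ _; ext x; simp [Equiv.trans_apply]
    case refine_4 => intro σ _; ext x; simp [Equiv.trans_apply]
  have hsum : ∑ b : Fin m, (univ.filter fun σ : Perm (Fin m) => σ x0 = b).card
      = (univ : Finset (Perm (Fin m))).card := by
    rw [Finset.card_eq_sum_card_fiberwise (fun σ _ => Finset.mem_univ (σ x0))]
  rw [Finset.card_univ, Fintype.card_perm, Fintype.card_fin] at hsum
  calc (univ.filter fun σ : Perm (Fin m) => σ x0 = a).card * m
      = ∑ _b : Fin m, (univ.filter fun σ : Perm (Fin m) => σ x0 = a).card := by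
        rw [Finset.sum_const, Finset.card_univ, Fintype.card_fin, smul_eq_mul, mul_comm]
    _ = ∑ b : Fin m, (univ.filter fun σ : Perm (Fin m) => σ x0 = b).card :=
        (Finset.sum_congr rfl fun b _ => (hconst b).symm)
    _ = Nat.factorial m := hsum

lemma Nfib_eq (a : Fin m) (S : Finset (Fin m)) (hS : S ⊆ univ.erase a) :
    Nfib a S = S.card.factorial * (m - 1 - S.card).factorial := by
  classical
  have hm : 0 < m := Fin.pos_iff_nonempty.mpr ⟨a⟩
  set j : ℕ := S.card with hjdef
  have hj : j ≤ m - 1 := by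
    have := Finset.card_le_card hS
    rwa [Finset.card_erase_of_mem (Finset.mem_univ a), Finset.card_univ, Fintype.card_fin] at this
  have hjm : j < m := by omega
  have hfiber : (univ.filter fun σ : Perm (Fin m) => σ.symm a = ⟨j, hjm⟩).card
      = ∑ S' ∈ (univ.erase a).powersetCard j,
          (((univ.filter fun σ : Perm (Fin m) => σ.symm a = ⟨j, hjm⟩)).filter
            (fun σ => Sset a σ = S')).card := by
    apply Finset.card_eq_sum_card_fiberwise
    intro σ hσ
    rw [Finset.mem_coe, Finset.mem_filter] at hσ
    rw [Finset.mem_coe, Finset.mem_powersetCard]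
    refine ⟨Sset_subset a σ, ?_⟩
    rw [card_Sset, hσ.2]
  have hfib_eq : ∀ S' ∈ (univ.erase a).powersetCard j,
      (((univ.filter fun σ : Perm (Fin m) => σ.symm a = ⟨j, hjm⟩)).filter
        (fun σ => Sset a σ = S')).card = Nfib a S' := by
    intro S' hS'
    rw [Finset.mem_powersetCard] at hS'
    congr 1
    rw [Finset.filter_filter]
    apply Finset.filter_congr
    intro σ _
    simp only [and_iff_right_iff_imp]
    intro hSs
    have : ((σ.symm a : Fin m) : ℕ) = j := by rw [← card_Sset a σ, hSs, hS'.2]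
    ext
    exact this
  have hconst : ∀ S' ∈ (univ.erase a).powersetCard j, Nfib a S' = Nfib a S := by
    intro S' hS'
    rw [Finset.mem_powersetCard] at hS'
    exact Nfib_congr a hS'.1 hS (hS'.2.trans hjdef)
  have hcount : (univ.filter fun σ : Perm (Fin m) => σ.symm a = ⟨j, hjm⟩).card
      = Nfib a S * (m - 1).choose j := by
    rw [hfiber, Finset.sum_congr rfl hfib_eq, Finset.sum_congr rfl hconst,
      Finset.sum_const, Finset.card_powersetCard,
      Finset.card_erase_of_mem (Finset.mem_univ a), Finset.card_univ, Fintype.card_fin,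
      smul_eq_mul, mul_comm]
  have hsymm_eq : (univ.filter fun σ : Perm (Fin m) => σ.symm a = ⟨j, hjm⟩)
      = (univ.filter fun σ : Perm (Fin m) => σ ⟨j, hjm⟩ = a) := by
    apply Finset.filter_congr
    intro σ _
    rw [Equiv.symm_apply_eq, eq_comm]
  have hfact : (univ.filter fun σ : Perm (Fin m) => σ ⟨j, hjm⟩ = a).card * m = Nat.factorial m :=
    card_perm_apply_eq _ a
  have hmfact : Nat.factorial m = m * Nat.factorial (m - 1) := by
    conv_lhs => rw [show m = (m - 1) + 1 by omega]
    rw [Nat.factorial_succ]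
    congr 1
    omega
  have hNc : Nfib a S * (m - 1).choose j = Nat.factorial (m - 1) := by
    have h1 : Nfib a S * (m - 1).choose j * m = Nat.factorial (m - 1) * m := by
      rw [← hcount, hsymm_eq, hfact, hmfact, mul_comm]
    exact Nat.eq_of_mul_eq_mul_right hm h1
  have hchoose : (m - 1).choose j * (j.factorial * (m - 1 - j).factorial)
      = Nat.factorial (m - 1) := by
    rw [← mul_assoc]
    exact Nat.choose_mul_factorial_mul_factorial hj
  have hcpos : 0 < (m - 1).choose j := Nat.choose_pos hj
  have : Nfib a S * (m - 1).choose j = (j.factorial * (m - 1 - j).factorial) * (m - 1).choose j := by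
    rw [hNc, ← hchoose, mul_comm]
  exact Nat.eq_of_mul_eq_mul_right hcpos this

/-! ### Factorial inequality -/

lemma fact_step {n j : ℕ} (h : j + 1 ≤ n / 2) :
    (j+1).factorial * (n - (j+1)).factorial < j.factorial * (n - j).factorial := by
  have h2 : 2 * (j + 1) ≤ n := by omega
  have hrw : n - j = (n - (j+1)) + 1 := by omega
  have e1 : j.factorial * (n - j).factorial * (j + 1)
      = (j+1).factorial * (n - (j+1)).factorial * (n - j) := by
    rw [hrw, Nat.factorial_succ, Nat.factorial_succ]
    ring
  have hlt : j + 1 < n - j := by omega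
  have pos : 0 < (j+1).factorial * (n - (j+1)).factorial :=
    Nat.mul_pos (Nat.factorial_pos _) (Nat.factorial_pos _)
  have hchain : (j+1).factorial * (n - (j+1)).factorial * (j+1)
      < j.factorial * (n - j).factorial * (j+1) := by
    calc (j+1).factorial * (n - (j+1)).factorial * (j+1)
        < (j+1).factorial * (n - (j+1)).factorial * (n - j) := by
          exact Nat.mul_lt_mul_of_le_of_lt (le_refl _) hlt pos
      _ = j.factorial * (n - j).factorial * (j+1) := e1.symm
  exact Nat.lt_of_mul_lt_mul_right hchain

lemma fact_anti {n : ℕ} : ∀ j, j ≤ n / 2 → ∀ i, i ≤ j →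
    j.factorial * (n - j).factorial ≤ i.factorial * (n - i).factorial := by
  intro j
  induction j with
  | zero =>
    intro _ i hi
    obtain rfl : i = 0 := Nat.le_zero.mp hi
    exact le_refl _
  | succ j ih =>
    intro hj i hi
    rcases Nat.lt_or_ge i (j+1) with hlt | hge
    · exact le_trans (le_of_lt (fact_step hj)) (ih (by omega) i (by omega))
    · obtain rfl : i = j + 1 := by omega
      exact le_refl _

lemma fact_key {n k : ℕ} (hk : k ≤ n) (h1 : k ≠ n / 2) (h2 : k ≠ (n+1) / 2) :
    (n/2).factorial * ((n+1)/2).factorial < k.factorial * (n-k).factorial := by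
  have hmid : (n+1)/2 = n - n/2 := by omega
  rw [hmid]
  have main : ∀ l, l ≤ n → l < n / 2 →
      (n/2).factorial * (n - n/2).factorial < l.factorial * (n-l).factorial := by
    intro l hl hlt
    calc (n/2).factorial * (n - n/2).factorial
        ≤ (l+1).factorial * (n - (l+1)).factorial :=
          fact_anti (n/2) (le_refl _) (l+1) (by omega)
      _ < l.factorial * (n - l).factorial := fact_step (by omega)
  rcases Nat.lt_or_ge k (n/2) with hlt | hge
  · exact main k hk hlt
  · have hgt : (n+1)/2 < k := by omega
    have h3 : n - k < n / 2 := by omega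
    have := main (n - k) (by omega) h3
    rw [show n - (n - k) = k by omega] at this
    calc (n/2).factorial * (n - n/2).factorial
        < (n-k).factorial * k.factorial := this
      _ = k.factorial * (n-k).factorial := Nat.mul_comm _ _

end NEM

open Equiv

/-- Given a maximal intersecting subfamily `F` of `P([n])` and a minimal set `A ∈ F` whose
size pair `{|A|, n - |A|}` differs from `{⌊n/2⌋, ⌈n/2⌉}`, the family
`G = ({B ⊆ [n+1] : B ∩ [n] ∈ F} \ {A}) ∪ {[n+1] \ A}` is a maximal intersecting subfamily
of `P([n+1])` that is not `∅`-minimal. -/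
theorem not_emptyMinimal (n : ℕ) (hn : 1 ≤ n)
    (F : Finset (Finset (Fin (n + 1))))
    (hFsub : ∀ B ∈ F, B ⊆ groundN n)
    (hFi : IsIntersecting F)
    (hFmax : ∀ G : Finset (Finset (Fin (n + 1))),
      (∀ B ∈ G, B ⊆ groundN n) → IsIntersecting G → F ⊆ G → G ⊆ F)
    (A : Finset (Fin (n + 1))) (hA : A ∈ F) (hAmin : ∀ B ⊂ A, B ∉ F)
    (hcard : ({A.card, n - A.card} : Finset ℕ) ≠ ({n / 2, (n + 1) / 2} : Finset ℕ)) :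
    IsMaxIntersecting (gFam n F A) ∧ ¬ EmptyMinimal (gFam n F A) := by
  classical
  set a : Fin (n + 1) := Fin.last n with ha_def
  have hag : a ∉ groundN n := by
    simp [groundN, ha_def]
  have hge : groundN n = Finset.univ.erase a := by
    ext x
    simp only [groundN, Finset.mem_filter, Finset.mem_univ, true_and, Finset.mem_erase, and_true]
    constructor
    · rintro h rfl
      rw [ha_def, Fin.val_last] at h
      omega
    · intro h
      have hx := x.isLt
      rcases Nat.lt_succ_iff_lt_or_eq.mp hx with h' | h'
      · exact h'
      · exact absurd (Fin.ext (by rw [h', ha_def, Fin.val_last])) h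
  have hgcard : (groundN n).card = n := NEM.card_filter_lt n (by omega)
  have hAsub : A ⊆ groundN n := hFsub A hA
  have hAne : A.Nonempty := by
    have := hFi A hA A hA
    rwa [Finset.inter_self] at this
  have haA : a ∉ A := fun h => hag (hAsub h)
  set Acn : Finset (Fin (n + 1)) := groundN n \ A with hAcn_def
  have hAcnF : Acn ∉ F := by
    intro h
    obtain ⟨x, hx⟩ := hFi A hA Acn h
    rw [Finset.mem_inter] at hx
    exact (Finset.mem_sdiff.mp hx.2).2 hx.1
  have hAneAcn : A ≠ Acn := by
    intro h
    obtain ⟨x, hx⟩ := hAne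
    have hx' : x ∈ Acn := h ▸ hx
    exact (Finset.mem_sdiff.mp hx').2 hx
  have hgsA : groundN n \ Acn = A := by
    ext x
    simp only [hAcn_def, Finset.mem_sdiff]
    constructor
    · rintro ⟨h1, h2⟩
      by_contra hxA
      exact h2 ⟨h1, hxA⟩
    · intro hxA
      exact ⟨hAsub hxA, fun h => h.2 hxA⟩
  -- completeness of F
  have complete : ∀ S ⊆ groundN n, S ∈ F ∨ groundN n \ S ∈ F := by
    intro S hSsub
    by_contra hcon
    push_neg at hcon
    obtain ⟨hS1, hS2⟩ := hcon
    by_cases hdis : ∃ C ∈ F, C ∩ S = ∅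
    · obtain ⟨C, hC, hCS⟩ := hdis
      have hCsub : C ⊆ groundN n \ S := by
        intro x hx
        refine Finset.mem_sdiff.mpr ⟨hFsub C hC hx, fun hxS => ?_⟩
        have hxCS : x ∈ C ∩ S := Finset.mem_inter.mpr ⟨hx, hxS⟩
        rw [hCS] at hxCS
        exact absurd hxCS (Finset.notMem_empty x)
      have hXS' : ∀ Z ∈ F, (Z ∩ (groundN n \ S)).Nonempty := by
        intro Z hZ
        obtain ⟨x, hx⟩ := hFi Z hZ C hC
        rw [Finset.mem_inter] at hx
        exact ⟨x, Finset.mem_inter.mpr ⟨hx.1, hCsub hx.2⟩⟩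
      have hint : IsIntersecting (insert (groundN n \ S) F) := by
        intro X hX Y hY
        rw [Finset.mem_insert] at hX hY
        rcases hX with rfl | hX <;> rcases hY with rfl | hY
        · obtain ⟨x, hx⟩ := hXS' C hC
          rw [Finset.mem_inter] at hx
          exact ⟨x, Finset.mem_inter.mpr ⟨hCsub hx.1, hCsub hx.1⟩⟩
        · obtain ⟨x, hx⟩ := hXS' Y hY
          rw [Finset.mem_inter] at hx
          exact ⟨x, Finset.mem_inter.mpr ⟨hx.2, hx.1⟩⟩
        · exact hXS' X hX
        · exact hFi X hX Y hY
      have hsubs : ∀ B ∈ insert (groundN n \ S) F, B ⊆ groundN n := by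
        intro B hB
        rw [Finset.mem_insert] at hB
        rcases hB with rfl | hB
        · exact Finset.sdiff_subset
        · exact hFsub B hB
      have := hFmax (insert (groundN n \ S) F) hsubs hint (Finset.subset_insert _ _)
      exact hS2 (this (Finset.mem_insert_self _ _))
    · push_neg at hdis
      have hSne : ∀ Z ∈ F, (Z ∩ S).Nonempty := fun Z hZ =>
        hdis Z hZ
      have hint : IsIntersecting (insert S F) := by
        intro X hX Y hY
        rw [Finset.mem_insert] at hX hY
        rcases hX with rfl | hX <;> rcases hY with rfl | hY
        · obtain ⟨x, hx⟩ := hSne A hA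
          rw [Finset.mem_inter] at hx
          exact ⟨x, Finset.mem_inter.mpr ⟨hx.2, hx.2⟩⟩
        · obtain ⟨x, hx⟩ := hSne Y hY
          rw [Finset.mem_inter] at hx
          exact ⟨x, Finset.mem_inter.mpr ⟨hx.2, hx.1⟩⟩
        · exact hSne X hX
        · exact hFi X hX Y hY
      have hsubs : ∀ B ∈ insert S F, B ⊆ groundN n := by
        intro B hB
        rw [Finset.mem_insert] at hB
        rcases hB with rfl | hB
        · exact hSsub
        · exact hFsub B hB
      have := hFmax (insert S F) hsubs hint (Finset.subset_insert _ _)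
      exact hS1 (this (Finset.mem_insert_self _ _))
  -- membership in gFam
  have mem_gFam : ∀ B : Finset (Fin (n + 1)),
      B ∈ gFam n F A ↔ ((B ∩ groundN n ∈ F ∧ B ≠ A) ∨ B = Aᶜ) := by
    intro B
    simp only [gFam, Finset.mem_union, Finset.mem_erase, Finset.mem_filter, Finset.mem_univ,
      true_and, Finset.mem_singleton]
    tauto
  have hmemX : ∀ Z : Finset (Fin (n + 1)), (Z ∩ groundN n ∈ F ∧ Z ≠ A) → (Z ∩ Aᶜ).Nonempty := by
    rintro Z ⟨hZF, hZA⟩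
    by_contra hemp
    rw [Finset.not_nonempty_iff_eq_empty] at hemp
    have hZsub : Z ⊆ A := by
      intro x hx
      by_contra hxA
      have hxm : x ∈ Z ∩ Aᶜ := Finset.mem_inter.mpr ⟨hx, Finset.mem_compl.mpr hxA⟩
      rw [hemp] at hxm
      exact absurd hxm (Finset.notMem_empty x)
    have hZg : Z ∩ groundN n = Z := Finset.inter_eq_left.mpr (hZsub.trans hAsub)
    rw [hZg] at hZF
    exact hAmin Z (Finset.ssubset_iff_subset_ne.mpr ⟨hZsub, hZA⟩) hZF
  have haAc : a ∈ Aᶜ := Finset.mem_compl.mpr haA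
  have hGi : IsIntersecting (gFam n F A) := by
    intro X hX Y hY
    rw [mem_gFam] at hX hY
    rcases hX with hX | rfl <;> rcases hY with hY | rfl
    · obtain ⟨x, hx⟩ := hFi _ hX.1 _ hY.1
      rw [Finset.mem_inter] at hx
      exact ⟨x, Finset.mem_inter.mpr ⟨(Finset.mem_inter.mp hx.1).1, (Finset.mem_inter.mp hx.2).1⟩⟩
    · exact hmemX X hX
    · obtain ⟨x, hx⟩ := hmemX Y hY
      rw [Finset.mem_inter] at hx
      exact ⟨x, Finset.mem_inter.mpr ⟨hx.2, hx.1⟩⟩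
    · exact ⟨a, Finset.mem_inter.mpr ⟨haAc, haAc⟩⟩
  have hGcomp : ∀ B : Finset (Fin (n + 1)), B ∈ gFam n F A ∨ Bᶜ ∈ gFam n F A := by
    intro B
    rcases complete (B ∩ groundN n) Finset.inter_subset_right with h | h
    · by_cases hBA : B = A
      · right
        rw [mem_gFam]
        right
        rw [hBA]
      · left
        rw [mem_gFam]
        left
        exact ⟨h, hBA⟩
    · have hBc : Bᶜ ∩ groundN n = groundN n \ (B ∩ groundN n) := by
        ext x
        simp only [Finset.mem_inter, Finset.mem_compl, Finset.mem_sdiff]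
        tauto
      by_cases hBA : Bᶜ = A
      · left
        rw [mem_gFam]
        right
        rw [← hBA, compl_compl]
      · right
        rw [mem_gFam]
        left
        exact ⟨by rw [hBc]; exact h, hBA⟩
  have hGmax : IsMaxIntersecting (gFam n F A) := by
    refine ⟨hGi, fun G' hG'i hsub X hX => ?_⟩
    rcases hGcomp X with h | h
    · exact h
    · exfalso
      obtain ⟨x, hx⟩ := hG'i X hX Xᶜ (hsub h)
      rw [Finset.mem_inter, Finset.mem_compl] at hx
      exact hx.2 hx.1
  refine ⟨hGmax, ?_⟩
  -- Part 2
  have mem_dual : ∀ Z : Finset (Fin (n + 1)), Z ∈ dualFam (gFam n F A) ↔ Zᶜ ∈ gFam n F A := by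
    intro Z
    rw [dualFam, Finset.mem_image]
    constructor
    · rintro ⟨B, hB, rfl⟩
      rwa [compl_compl]
    · intro h
      exact ⟨Zᶜ, h, by rw [compl_compl]⟩
  have hcomplg : ∀ X : Finset (Fin (n + 1)), Xᶜ ∩ groundN n = groundN n \ X := by
    intro X
    ext x
    simp only [Finset.mem_inter, Finset.mem_compl, Finset.mem_sdiff]
    tauto
  have hinsc : ∀ X : Finset (Fin (n + 1)), a ∉ X → (insert a X)ᶜ = groundN n \ X := by
    intro X haX
    ext x
    simp only [Finset.mem_compl, Finset.mem_insert, Finset.mem_sdiff, hge, Finset.mem_erase,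
      Finset.mem_univ, and_true]
    tauto
  have hXsubg : ∀ X : Finset (Fin (n + 1)), a ∉ X → X ⊆ groundN n := by
    intro X haX x hx
    rw [hge, Finset.mem_erase]
    exact ⟨fun h => haX (h ▸ hx), Finset.mem_univ x⟩
  have hgsX : ∀ X : Finset (Fin (n + 1)), a ∉ X → groundN n \ (groundN n \ X) = X := by
    intro X haX
    ext x
    simp only [Finset.mem_sdiff]
    constructor
    · rintro ⟨h1, h2⟩
      by_contra hxX
      exact h2 ⟨h1, hxX⟩
    · intro hxX
      exact ⟨hXsubg X haX hxX, fun h => h.2 hxX⟩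
  have key_formula : ∀ D : Finset (Fin (n + 1)), a ∉ D →
      LamW (dualFam (gFam n F A)) D (insert a D)
        = (NEM.Nfib a (symmDiff D A) : ℝ) + (NEM.Nfib a (symmDiff D Acn) : ℝ) := by
    intro D haD
    rw [NEM.lamW_eq (dualFam (gFam n F A)) D a haD]
    have per : ∀ σ : Perm (Fin (n + 1)),
        ((if symmDiff D (NEM.Sset a σ) ∈ dualFam (gFam n F A) then (1 : ℝ) else 0)
          - (if symmDiff (insert a D) (NEM.Sset a σ) ∈ dualFam (gFam n F A) then (1 : ℝ) else 0))
        = ((if NEM.Sset a σ = symmDiff D A then (1 : ℝ) else 0)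
          + (if NEM.Sset a σ = symmDiff D Acn then (1 : ℝ) else 0)) := by
      intro σ
      set S : Finset (Fin (n + 1)) := NEM.Sset a σ with hS_def
      set X : Finset (Fin (n + 1)) := symmDiff D S with hX_def
      have haS : a ∉ S := NEM.not_mem_Sset a σ
      have haX : a ∉ X := by
        rw [hX_def, Finset.mem_symmDiff]
        rintro (⟨h, -⟩ | ⟨h, -⟩)
        · exact haD h
        · exact haS h
      have hins : symmDiff (insert a D) S = insert a X := NEM.insert_symmDiff haD haS
      have hXcA : Xᶜ ≠ A := by
        intro h
        exact haA (h ▸ Finset.mem_compl.mpr haX)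
      have e1 : (X ∈ dualFam (gFam n F A)) ↔ (groundN n \ X ∈ F ∨ X = A) := by
        rw [mem_dual, mem_gFam, hcomplg X]
        constructor
        · rintro (⟨h1, -⟩ | h1)
          · exact Or.inl h1
          · right
            rw [← compl_compl X, h1, compl_compl]
        · rintro (h1 | rfl)
          · exact Or.inl ⟨h1, hXcA⟩
          · exact Or.inr rfl
      have e2 : (insert a X ∈ dualFam (gFam n F A)) ↔
          (groundN n \ X ∈ F ∧ groundN n \ X ≠ A) := by
        rw [mem_dual, mem_gFam, hinsc X haX]
        have hgA : groundN n \ X ≠ Aᶜ := by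
          intro h
          have : a ∈ groundN n \ X := by rw [h]; exact haAc
          exact hag (Finset.mem_sdiff.mp this).1
        have hgg : (groundN n \ X) ∩ groundN n = groundN n \ X :=
          Finset.inter_eq_left.mpr Finset.sdiff_subset
        rw [hgg]
        constructor
        · rintro (⟨h1, h2⟩ | h1)
          · exact ⟨h1, h2⟩
          · exact absurd h1 hgA
        · rintro ⟨h1, h2⟩
          exact Or.inl ⟨h1, h2⟩
      have hc1 : (S = symmDiff D A) ↔ (X = A) := by
        rw [hX_def]
        exact NEM.symmDiff_cancel_iff.symm
      have hc2 : (S = symmDiff D Acn) ↔ (X = Acn) := by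
        rw [hX_def]
        exact NEM.symmDiff_cancel_iff.symm
      rw [hins]
      simp only [e1, e2, hc1, hc2]
      by_cases hA1 : X = A
      · have hP : ¬ (groundN n \ X ∈ F) := by
          rw [hA1]
          rw [show groundN n \ A = Acn from hAcn_def.symm]
          exact hAcnF
        have hA2 : X ≠ Acn := by rw [hA1]; exact hAneAcn
        rw [if_pos (Or.inr hA1), if_neg (fun h => hP h.1), if_pos hA1, if_neg hA2]
        norm_num
      · by_cases hA2 : X = Acn
        · have hgX : groundN n \ X = A := by rw [hA2]; exact hgsA
          rw [if_pos (Or.inl (hgX ▸ hA)), if_neg, if_neg hA1, if_pos hA2]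
          · norm_num
          · rintro ⟨-, h2⟩
            exact h2 hgX
        · by_cases hP : groundN n \ X ∈ F
          · have hQ : groundN n \ X ≠ A := by
              intro h
              apply hA2
              have h2 := congrArg (fun T => groundN n \ T) h
              rw [hgsX X haX] at h2
              rw [h2, ← hAcn_def]
            rw [if_pos (Or.inl hP), if_pos ⟨hP, hQ⟩, if_neg hA1, if_neg hA2]
            norm_num
          · rw [if_neg, if_neg, if_neg hA1, if_neg hA2]
            · norm_num
            · rintro ⟨h1, -⟩
              exact hP h1
            · rintro (h1 | h1)
              · exact hP h1
              · exact hA1 h1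
    rw [Finset.sum_congr rfl (fun σ _ => per σ), Finset.sum_add_distrib,
      Finset.sum_boole, Finset.sum_boole]
    rfl
  -- choose the witness D
  intro hEM
  obtain ⟨W, hWsub, hWcard⟩ : ∃ W ⊆ groundN n, W.card = n / 2 :=
    Finset.exists_subset_card_eq (by rw [hgcard]; omega)
  have haW : a ∉ W := fun h => hag (hWsub h)
  set D : Finset (Fin (n + 1)) := symmDiff A W with hD_def
  have haD : a ∉ D := by
    rw [hD_def, Finset.mem_symmDiff]
    rintro (⟨h, -⟩ | ⟨h, -⟩)
    · exact haA h
    · exact haW h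
  have hDA : symmDiff D A = W := by
    rw [hD_def, symmDiff_comm (symmDiff A W) A, symmDiff_symmDiff_cancel_left]
  have hsdg : ∀ T : Finset (Fin (n + 1)), T ⊆ groundN n →
      symmDiff (groundN n) T = groundN n \ T := by
    intro T hT
    ext x
    simp only [Finset.mem_symmDiff, Finset.mem_sdiff]
    constructor
    · rintro (⟨h1, h2⟩ | ⟨h1, h2⟩)
      · exact ⟨h1, h2⟩
      · exact absurd (hT h1) h2
    · rintro ⟨h1, h2⟩
      exact Or.inl ⟨h1, h2⟩
  have hDAcn : symmDiff D Acn = groundN n \ W := by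
    rw [hD_def, hAcn_def, ← hsdg A hAsub, ← hsdg W hWsub]
    rw [symmDiff_comm A W, symmDiff_comm (groundN n) A, symmDiff_assoc,
      symmDiff_symmDiff_cancel_left, symmDiff_comm W (groundN n)]
  -- cardinalities
  have hkn : A.card ≤ n := by
    have := Finset.card_le_card hAsub
    rwa [hgcard] at this
  have hAcn_card : Acn.card = n - A.card := by
    rw [hAcn_def, Finset.card_sdiff_of_subset hAsub, hgcard]
  have hgW_card : (groundN n \ W).card = n - n / 2 := by
    rw [Finset.card_sdiff_of_subset hWsub, hgcard, hWcard]
  have hsubea : ∀ X : Finset (Fin (n + 1)), a ∉ X → X ⊆ Finset.univ.erase a := by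
    intro X haX
    rw [← hge]
    exact hXsubg X haX
  have hk1 : A.card ≠ n / 2 := by
    intro h
    apply hcard
    rw [h, show n - n / 2 = (n + 1) / 2 by omega]
  have hk2 : A.card ≠ (n + 1) / 2 := by
    intro h
    apply hcard
    rw [h, show n - (n + 1) / 2 = n / 2 by omega, Finset.pair_comm]
  -- evaluate the two coordinates
  have hval : ∀ T : Finset (Fin (n + 1)), a ∉ T →
      NEM.Nfib a T = T.card.factorial * (n - T.card).factorial := by
    intro T haT
    rw [NEM.Nfib_eq a T (hsubea T haT)]
    simp
  have hAcn_a : a ∉ Acn := fun h => hag (Finset.mem_sdiff.mp h).1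
  have hgW_a : a ∉ groundN n \ W := fun h => hag (Finset.mem_sdiff.mp h).1
  have h0 := key_formula ∅ (Finset.notMem_empty a)
  rw [NEM.empty_symmDiff, NEM.empty_symmDiff] at h0
  have hD' := key_formula D haD
  rw [hDA, hDAcn] at hD'
  have hle := hEM a D haD
  rw [show ({a} : Finset (Fin (n + 1))) = insert a (∅ : Finset (Fin (n + 1))) by simp] at hle
  rw [h0, hD'] at hle
  rw [hval A haA, hval Acn hAcn_a, hval W haW, hval (groundN n \ W) hgW_a,
    hAcn_card, hWcard, hgW_card, show n - (n - A.card) = A.card by omega,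
    show n - (n - n / 2) = n / 2 by omega] at hle
  have hnat : (n / 2).factorial * (n - n / 2).factorial
        + (n - n / 2).factorial * (n / 2).factorial
      < A.card.factorial * (n - A.card).factorial
        + (n - A.card).factorial * A.card.factorial := by
    have h1 : (n / 2).factorial * ((n + 1) / 2).factorial
        < A.card.factorial * (n - A.card).factorial := NEM.fact_key hkn hk1 hk2
    rw [show n - n / 2 = (n + 1) / 2 by omega]
    have h2 : ((n + 1) / 2).factorial * (n / 2).factorial
        < (n - A.card).factorial * A.card.factorial := by
      rw [Nat.mul_comm, Nat.mul_comm (n - A.card).factorial]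
      exact h1
    omega
  have hreal : ((n / 2).factorial * (n - n / 2).factorial
        + (n - n / 2).factorial * (n / 2).factorial : ℝ)
      < (A.card.factorial * (n - A.card).factorial
        + (n - A.card).factorial * A.card.factorial : ℝ) := by
    exact_mod_cast hnat
  push_cast at hle
  linarith
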